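/- Let n ≥ 1 be an integer, σ ∈ S_n a permutation, and γ a real number. (i) If 0 < γ < 1, then for every g ∈ S_n one has γ·l(g) + l(σ⁻¹g) ≤ n + γ·l(σ), with equality if and only if g = σ. (ii) If γ > 1, then for every g ∈ S_n one has γ·l(g) + l(σ⁻¹g) ≤ γ·n + l(σ), with equality if and only if g is the identity permutation. -/

import Mathlib

/-- Number of cycles of a permutation, counting fixed points as cycles of length 1. -/
def cycleCount {n : ℕ} (g : Equiv.Perm (Fin n)) : ℕ :=
  g.cycleType.card + (n - g.support.card)

namespace CycleCountAux

open Equiv Equiv.Perm Module LinearMap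

variable {n : ℕ}

/-- The same-cycle setoid. -/
def sc (g : Equiv.Perm (Fin n)) : Setoid (Fin n) :=
  ⟨g.SameCycle, ⟨Equiv.Perm.SameCycle.refl g, Equiv.Perm.SameCycle.symm,
    Equiv.Perm.SameCycle.trans⟩⟩

lemma sameCycle_fixed {g : Equiv.Perm (Fin n)} {x y : Fin n} (h : g.SameCycle x y)
    (hx : g x = x) : y = x := by
  obtain ⟨i, hi⟩ := h
  rw [← hi, Equiv.Perm.zpow_apply_eq_self_of_apply_eq_self hx]

/-- Map from the quotient classifying classes into fixed points and cycle factors. -/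
noncomputable def fwd (g : Equiv.Perm (Fin n)) :
    Quotient (sc g) → ({x : Fin n // g x = x} ⊕ {c : Equiv.Perm (Fin n) // c ∈ g.cycleFactorsFinset}) :=
  Quotient.lift
    (fun x => if h : g x = x then Sum.inl ⟨x, h⟩ else
      Sum.inr ⟨g.cycleOf x, Equiv.Perm.cycleOf_mem_cycleFactorsFinset_iff.2 (by
        simpa [Equiv.Perm.mem_support] using h)⟩)
    (by
      intro x y (h : g.SameCycle x y)
      by_cases hx : g x = x
      · have := sameCycle_fixed h hx; subst this; rfl
      · have hy : ¬ g y = y := by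
          intro hy
          exact hx (by rw [sameCycle_fixed h.symm hy]; exact hy)
        simp only [dif_neg hx, dif_neg hy, h.cycleOf_eq])

lemma fwd_mk (g : Equiv.Perm (Fin n)) (x : Fin n) :
    fwd g ⟦x⟧ = if h : g x = x then Sum.inl ⟨x, h⟩ else
      Sum.inr ⟨g.cycleOf x, Equiv.Perm.cycleOf_mem_cycleFactorsFinset_iff.2 (by
        simpa [Equiv.Perm.mem_support] using h)⟩ := rfl

lemma fwd_bijective (g : Equiv.Perm (Fin n)) : Function.Bijective (fwd g) := by
  constructor
  · rintro ⟨x⟩ ⟨y⟩ hxy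
    have hxy : fwd g ⟦x⟧ = fwd g ⟦y⟧ := hxy
    rw [fwd_mk, fwd_mk] at hxy
    refine Quotient.sound (?_ : g.SameCycle x y)
    by_cases hx : g x = x <;> by_cases hy : g y = y
    · rw [dif_pos hx, dif_pos hy] at hxy
      obtain rfl : x = y := by simpa using hxy
      exact Equiv.Perm.SameCycle.refl g x
    · rw [dif_pos hx, dif_neg hy] at hxy; simp at hxy
    · rw [dif_neg hx, dif_pos hy] at hxy; simp at hxy
    · rw [dif_neg hx, dif_neg hy] at hxy
      have hco : g.cycleOf x = g.cycleOf y := by simpa using hxy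
      have hyy : y ∈ (g.cycleOf y).support :=
        Equiv.Perm.mem_support_cycleOf_iff.2
          ⟨Equiv.Perm.SameCycle.refl g y, Equiv.Perm.mem_support.2 hy⟩
      rw [← hco] at hyy
      exact (Equiv.Perm.mem_support_cycleOf_iff.1 hyy).1
  · rintro (⟨x, hx⟩ | ⟨c, hc⟩)
    · exact ⟨⟦x⟧, by rw [fwd_mk, dif_pos hx]⟩
    · have hcyc : c.IsCycle := (Equiv.Perm.mem_cycleFactorsFinset_iff.1 hc).1
      obtain ⟨a, ha⟩ : c.support.Nonempty :=
        hcyc.nonempty_support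
      have hga : ¬ g a = a := by
        have := (Equiv.Perm.mem_cycleFactorsFinset_iff.1 hc).2 a ha
        rw [← this]
        exact Equiv.Perm.mem_support.1 ha
      refine ⟨⟦a⟧, ?_⟩
      rw [fwd_mk, dif_neg hga]
      congr 1
      exact Subtype.ext (Equiv.Perm.cycle_is_cycleOf ha hc).symm

noncomputable instance quotFintype (g : Equiv.Perm (Fin n)) : Fintype (Quotient (sc g)) :=
  Fintype.ofInjective (fwd g) (fwd_bijective g).injective

lemma card_quot (g : Equiv.Perm (Fin n)) :
    Fintype.card (Quotient (sc g)) = cycleCount g := by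
  rw [Fintype.card_of_bijective (fwd_bijective g), Fintype.card_sum, Fintype.card_coe]
  have h1 : Fintype.card {x : Fin n // g x = x} = n - g.support.card := by
    rw [Fintype.card_subtype]
    have := Finset.card_filter_add_card_filter_not
      (s := (Finset.univ : Finset (Fin n))) (p := fun x => g x = x)
    have hs : (Finset.univ.filter fun x => ¬ g x = x) = g.support := by
      ext x; simp [Equiv.Perm.mem_support]
    rw [hs, Finset.card_univ, Fintype.card_fin] at this
    omega
  have h2 : Multiset.card g.cycleType = g.cycleFactorsFinset.card := by
    rw [Equiv.Perm.cycleType_def, Multiset.card_map]; rfl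
  rw [h1]
  unfold cycleCount
  omega

/-- Precomposition by `g` as an endomorphism of `Fin n → ℝ`. -/
noncomputable def rho (g : Equiv.Perm (Fin n)) : Module.End ℝ (Fin n → ℝ) :=
  LinearMap.funLeft ℝ ℝ g

lemma rho_mul (a b : Equiv.Perm (Fin n)) : rho (a * b) = rho b * rho a := by
  have : ⇑(a * b) = ⇑a ∘ ⇑b := rfl
  rw [rho, this, LinearMap.funLeft_comp]; rfl

lemma mem_ker_rho {g : Equiv.Perm (Fin n)} {v : Fin n → ℝ} :
    v ∈ LinearMap.ker (rho g - 1) ↔ ∀ x, v (g x) = v x := by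
  constructor
  · intro h x
    have := congrFun (LinearMap.mem_ker.1 h) x
    simpa [rho, sub_eq_zero, LinearMap.funLeft] using this
  · intro h
    refine LinearMap.mem_ker.2 (funext fun x => ?_)
    simpa [rho, sub_eq_zero, LinearMap.funLeft] using h x

lemma fixed_zpow {g : Equiv.Perm (Fin n)} {v : Fin n → ℝ} (hv : ∀ x, v (g x) = v x)
    (i : ℤ) (x : Fin n) : v ((g ^ i) x) = v x := by
  have hnat : ∀ (m : ℕ) (x : Fin n), v ((g ^ m) x) = v x := by
    intro m
    induction m with
    | zero => intro x; simp
    | succ k ih => intro x; rw [pow_succ, Equiv.Perm.mul_apply, ih, hv]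
  have hinv : ∀ x, v (g⁻¹ x) = v x := by
    intro x
    conv_rhs => rw [← show g (g⁻¹ x) = x from Equiv.apply_symm_apply g x, hv]
  induction i using Int.rec with
  | ofNat m => exact hnat m x
  | negSucc m =>
      rw [zpow_negSucc]
      have : ∀ (m : ℕ) (x : Fin n), v ((g ^ (m+1))⁻¹ x) = v x := by
        intro m
        induction m with
        | zero => intro x; simpa using hinv x
        | succ k ih =>
            intro x
            have : (g ^ (k + 1 + 1))⁻¹ = (g ^ (k+1))⁻¹ * g⁻¹ := by
              rw [← mul_inv_rev, ← pow_succ']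
            rw [this, Equiv.Perm.mul_apply, ih, hinv]
      exact this m x

/-- The fixed space of `rho g` is linearly equivalent to functions on the cycle quotient. -/
noncomputable def fixedEquiv (g : Equiv.Perm (Fin n)) :
    (Quotient (sc g) → ℝ) ≃ₗ[ℝ] LinearMap.ker (rho g - 1) where
  toFun w := ⟨fun x => w ⟦x⟧, mem_ker_rho.2 fun x => by
    congr 1
    exact Quotient.sound (((Equiv.Perm.sameCycle_apply_right (y := x)).2
      (Equiv.Perm.SameCycle.refl g x)).symm : g.SameCycle (g x) x)⟩
  map_add' w₁ w₂ := rfl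
  map_smul' c w := rfl
  invFun v := Quotient.lift (v : Fin n → ℝ) (fun x y (h : g.SameCycle x y) => by
    obtain ⟨i, hi⟩ := h
    rw [← hi]
    exact (fixed_zpow (mem_ker_rho.1 v.2) i x).symm)
  left_inv w := by funext q; induction q using Quotient.ind; rfl
  right_inv v := by ext x; rfl

lemma finrank_ker (g : Equiv.Perm (Fin n)) :
    Module.finrank ℝ (LinearMap.ker (rho g - 1)) = cycleCount g := by
  rw [← (fixedEquiv g).finrank_eq, Module.finrank_pi, card_quot]

lemma finrank_range_eq (g : Equiv.Perm (Fin n)) :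
    Module.finrank ℝ (LinearMap.range (rho g - 1)) = n - cycleCount g ∧ cycleCount g ≤ n := by
  have h := LinearMap.finrank_range_add_finrank_ker (rho g - 1)
  rw [finrank_ker, Module.finrank_pi, Fintype.card_fin] at h
  omega

lemma cycleCount_le (g : Equiv.Perm (Fin n)) : cycleCount g ≤ n :=
  (finrank_range_eq g).2

lemma cycleCount_one : cycleCount (1 : Equiv.Perm (Fin n)) = n := by
  simp [cycleCount]

lemma cycleCount_eq_iff {g : Equiv.Perm (Fin n)} : cycleCount g = n ↔ g = 1 := by
  constructor
  · intro h
    have hsum := Equiv.Perm.sum_cycleType g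
    have h2 : Multiset.card g.cycleType * 2 ≤ g.cycleType.sum := by
      simpa [smul_eq_mul] using Multiset.card_nsmul_le_sum (s := g.cycleType)
        (fun x hx => Equiv.Perm.two_le_of_mem_cycleType hx)
    have hle : g.support.card ≤ n := by
      simpa using Finset.card_le_univ g.support
    unfold cycleCount at h
    have hcard : Multiset.card g.cycleType = 0 := by omega
    exact Equiv.Perm.card_cycleType_eq_zero.1 hcard
  · rintro rfl; exact cycleCount_one

lemma cycleCount_inv (g : Equiv.Perm (Fin n)) : cycleCount g⁻¹ = cycleCount g := by
  unfold cycleCount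
  rw [Equiv.Perm.cycleType_inv, Equiv.Perm.support_inv]

lemma triangle (a b : Equiv.Perm (Fin n)) :
    cycleCount a + cycleCount b ≤ n + cycleCount (a * b) := by
  have hab := finrank_range_eq (a * b)
  have ha := finrank_range_eq a
  have hb := finrank_range_eq b
  have key : Module.finrank ℝ (LinearMap.range (rho (a * b) - 1)) ≤
      Module.finrank ℝ (LinearMap.range (rho a - 1)) +
      Module.finrank ℝ (LinearMap.range (rho b - 1)) := by
    have hdecomp : rho (a * b) - 1 = rho b * (rho a - 1) + (rho b - 1) := by
      rw [rho_mul, mul_sub, mul_one]; abel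
    have hrange : LinearMap.range (rho (a * b) - 1) ≤
        LinearMap.range (rho b * (rho a - 1)) ⊔ LinearMap.range (rho b - 1) := by
      rintro x ⟨v, rfl⟩
      rw [hdecomp]
      exact Submodule.add_mem_sup ⟨v, rfl⟩ ⟨v, rfl⟩
    calc Module.finrank ℝ (LinearMap.range (rho (a * b) - 1))
        ≤ Module.finrank ℝ ((LinearMap.range (rho b * (rho a - 1)) ⊔
            LinearMap.range (rho b - 1) : Submodule ℝ (Fin n → ℝ))) :=
          Submodule.finrank_mono hrange
      _ ≤ Module.finrank ℝ (LinearMap.range (rho b * (rho a - 1))) +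
            Module.finrank ℝ (LinearMap.range (rho b - 1)) :=
          Submodule.finrank_add_le_finrank_add_finrank _ _
      _ ≤ Module.finrank ℝ (LinearMap.range (rho a - 1)) +
            Module.finrank ℝ (LinearMap.range (rho b - 1)) := by
          gcongr
          have : LinearMap.range (rho b * (rho a - 1)) =
              Submodule.map (rho b) (LinearMap.range (rho a - 1)) := by
            rw [← LinearMap.range_comp]; rfl
          rw [this]
          exact Submodule.finrank_map_le _ _
  omega

end CycleCountAux

/-- (i) For `0 < γ < 1`, `γ·l(g) + l(σ⁻¹g) ≤ n + γ·l(σ)` with equality iff `g = σ`.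
(ii) For `γ > 1`, `γ·l(g) + l(σ⁻¹g) ≤ γ·n + l(σ)` with equality iff `g = 1`. -/
theorem cycleCount_weighted_max (n : ℕ) (hn : 1 ≤ n) (σ : Equiv.Perm (Fin n)) (γ : ℝ) :
    (0 < γ → γ < 1 → ∀ g : Equiv.Perm (Fin n),
      γ * cycleCount g + cycleCount (σ⁻¹ * g) ≤ n + γ * cycleCount σ ∧
      (γ * cycleCount g + cycleCount (σ⁻¹ * g) = n + γ * cycleCount σ ↔ g = σ)) ∧
    (1 < γ → ∀ g : Equiv.Perm (Fin n),
      γ * cycleCount g + cycleCount (σ⁻¹ * g) ≤ γ * n + cycleCount σ ∧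
      (γ * cycleCount g + cycleCount (σ⁻¹ * g) = γ * n + cycleCount σ ↔ g = 1)) := by
  have tri : ∀ g : Equiv.Perm (Fin n),
      (cycleCount g : ℝ) + cycleCount (σ⁻¹ * g) ≤ n + cycleCount σ := by
    intro g
    have h := CycleCountAux.triangle g (g⁻¹ * σ)
    rw [← mul_assoc, mul_inv_cancel, one_mul] at h
    rw [← CycleCountAux.cycleCount_inv (g⁻¹ * σ), mul_inv_rev, inv_inv] at h
    exact_mod_cast h
  have hle : ∀ g : Equiv.Perm (Fin n), (cycleCount g : ℝ) ≤ n := by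
    intro g; exact_mod_cast CycleCountAux.cycleCount_le g
  have heqn : ∀ g : Equiv.Perm (Fin n), (cycleCount g : ℝ) = n ↔ g = 1 := by
    intro g
    rw [← CycleCountAux.cycleCount_eq_iff]
    exact_mod_cast Nat.cast_inj (R := ℝ)
  constructor
  · intro hγ0 hγ1 g
    have key : γ * cycleCount g + cycleCount (σ⁻¹ * g)
        = γ * ((cycleCount g : ℝ) + cycleCount (σ⁻¹ * g)) + (1 - γ) * cycleCount (σ⁻¹ * g) := by
      ring
    have h1 : γ * ((cycleCount g : ℝ) + cycleCount (σ⁻¹ * g)) ≤ γ * (n + cycleCount σ) :=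
      mul_le_mul_of_nonneg_left (tri g) hγ0.le
    have h2 : (1 - γ) * (cycleCount (σ⁻¹ * g) : ℝ) ≤ (1 - γ) * n :=
      mul_le_mul_of_nonneg_left (hle _) (by linarith)
    constructor
    · rw [key]; nlinarith
    constructor
    · intro heq
      have e2 : (cycleCount (σ⁻¹ * g) : ℝ) = n := by nlinarith [tri g, hle (σ⁻¹ * g)]
      have : σ⁻¹ * g = 1 := (heqn _).1 e2
      have := congrArg (σ * ·) this
      simpa [← mul_assoc] using this
    · rintro rfl
      simp only [inv_mul_cancel]
      rw [CycleCountAux.cycleCount_one]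
      push_cast
      ring
  · intro hγ g
    have key : γ * cycleCount g + cycleCount (σ⁻¹ * g)
        = (γ - 1) * cycleCount g + ((cycleCount g : ℝ) + cycleCount (σ⁻¹ * g)) := by
      ring
    constructor
    · rw [key]; nlinarith [tri g, hle g]
    constructor
    · intro heq
      have e1 : (cycleCount g : ℝ) = n := by nlinarith [tri g, hle g]
      exact (heqn _).1 e1
    · rintro rfl
      rw [mul_one, CycleCountAux.cycleCount_one, CycleCountAux.cycleCount_inv]
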